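/- Let a, e1, e2, e3 be positive integers with a < e_i for i = 1,2,3 and gcd(e1, e2, e3) = 1, and let λ ≥ 1 be a rational number. Then (a + e2 + e3)/(e1 * e2 * e3) + λ/a ≤ 1/2 + λ. -/
import Mathlib

lemma nat_key (a e1 e2 e3 : ℕ) (ha : 1 ≤ a)
    (h1 : a < e1) (h2 : a < e2) (h3 : a < e3)
    (hne : ¬ (e1 = 2 ∧ e2 = 2 ∧ e3 = 2)) :
    2 * (a + e2 + e3) ≤ e1 * e2 * e3 := by
  zify at *
  rcases lt_or_ge a 2 with haa | haa
  · have ha1 : (a:ℤ) = 1 := by omega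
    rw [ha1]
    rcases lt_or_ge (e1:ℤ) 3 with he1 | he1
    · have he1' : (e1:ℤ) = 2 := by omega
      rw [he1']
      have : (e2:ℤ) ≥ 3 ∨ (e3:ℤ) ≥ 3 := by
        by_contra hc
        push_neg at hc
        exact hne ⟨by omega, by omega, by omega⟩
      rcases this with h | h <;> nlinarith [mul_nonneg (by omega : (0:ℤ) ≤ e2 - 2) (by omega : (0:ℤ) ≤ e3 - 2), mul_nonneg (by omega : (0:ℤ) ≤ e2 - 1) (by omega : (0:ℤ) ≤ e3 - 1)]
    · nlinarith [mul_nonneg (by omega : (0:ℤ) ≤ e2 - 1) (by omega : (0:ℤ) ≤ e3 - 1), mul_nonneg (by omega : (0:ℤ) ≤ e2 - 2) (by omega : (0:ℤ) ≤ e3 - 2)]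
  · nlinarith [mul_nonneg (by omega : (0:ℤ) ≤ e2 - 1) (by omega : (0:ℤ) ≤ e3 - 2), mul_nonneg (by omega : (0:ℤ) ≤ (e1 - 3)) (mul_nonneg (by omega : (0:ℤ) ≤ e2) (by omega : (0:ℤ) ≤ e3))]

/-- Lemma (numerics): for positive integers `a < e₁, e₂, e₃` with `gcd {e₁, e₂, e₃} = 1`
and a rational `λ ≥ 1`, we have `(a + e₂ + e₃)/(e₁ e₂ e₃) + λ/a ≤ 1/2 + λ`. -/
theorem stmt_1 (a e1 e2 e3 : ℕ) (ha : 0 < a)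
    (h1 : a < e1) (h2 : a < e2) (h3 : a < e3)
    (hgcd : Nat.gcd e1 (Nat.gcd e2 e3) = 1)
    (lam : ℚ) (hlam : 1 ≤ lam) :
    ((a : ℚ) + e2 + e3) / ((e1 : ℚ) * e2 * e3) + lam / (a : ℚ) ≤ 1 / 2 + lam := by
  have hne : ¬ (e1 = 2 ∧ e2 = 2 ∧ e3 = 2) := by
    rintro ⟨rfl, rfl, rfl⟩; simp at hgcd
  have key := nat_key a e1 e2 e3 ha h1 h2 h3 hne
  have hA : (0:ℚ) < a := by exact_mod_cast ha
  have hE : (0:ℚ) < (e1:ℚ) * e2 * e3 := by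
    have : 0 < e1 * e2 * e3 := by
      have : 0 < e1 := by omega
      have : 0 < e2 := by omega
      have : 0 < e3 := by omega
      positivity
    exact_mod_cast this
  have hA1 : (1:ℚ) ≤ a := by exact_mod_cast ha
  have t1 : lam / a ≤ lam := by
    rw [div_le_iff₀ hA]; nlinarith
  have t2 : ((a : ℚ) + e2 + e3) / ((e1 : ℚ) * e2 * e3) ≤ 1 / 2 := by
    rw [div_le_div_iff₀ hE (by norm_num)]
    have : (2 * (a + e2 + e3) : ℚ) ≤ (e1 * e2 * e3 : ℕ) := by
      push_cast; exact_mod_cast key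
    push_cast at this ⊢; linarith
  linarith
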